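/- Define m₃(R) = (1/(1 + R²)³)·( 1 + 3R² + (π²/3)·(1 − R²) − (1 + 7R² + 7R⁴ + R⁶)·log(1 + R²)/(2R²) + (1 − R²)·Li₂(−R²) ) for R > 0. Then |m₃(R)| ≤ (3 + 2π²)/6 for all R > 0. -/

import Mathlib

open Real MeasureTheory

/-- The dilogarithm Li₂(x) = ∫₀^x (−log(1−y)/y) dy, defined for x ≤ 1. -/
noncomputable def Li2 (x : ℝ) : ℝ := ∫ y in (0:ℝ)..x, -Real.log (1 - y) / y

/-- The coefficient function m₃. -/
noncomputable def m3 (R : ℝ) : ℝ :=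
  (1/(1 + R^2)^3) * (1 + 3*R^2 + (π^2/3)*(1 - R^2)
    - (1 + 7*R^2 + 7*R^4 + R^6) * Real.log (1 + R^2) / (2*R^2)
    + (1 - R^2) * Li2 (-R^2))

lemma log_ge_quad (t : ℝ) (ht : 0 ≤ t) : t - t^2/2 ≤ Real.log (1+t) := by
  have h1 : (0:ℝ) < 1 + t := by linarith
  have hlog : Real.log (1+t) = ∫ x in (1:ℝ)..(1+t), x⁻¹ := by
    rw [integral_inv_of_pos one_pos h1]; simp
  have hint2 : IntervalIntegrable (fun x : ℝ => x⁻¹) volume 1 (1+t) := by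
    apply ContinuousOn.intervalIntegrable
    apply ContinuousOn.inv₀ continuousOn_id
    intro x hx
    rw [Set.uIcc_of_le (by linarith)] at hx
    have h1x := hx.1
    simp only [id] at *
    intro h; rw [h] at h1x; linarith
  have hmono : (∫ x in (1:ℝ)..(1+t), (2 - x)) ≤ ∫ x in (1:ℝ)..(1+t), x⁻¹ := by
    apply intervalIntegral.integral_mono_on (by linarith)
      ((continuous_const.sub continuous_id).intervalIntegrable _ _) hint2
    intro x hx
    have hx1 : (1:ℝ) ≤ x := hx.1
    have hx0 : (0:ℝ) < x := by linarith
    have hxi : x * x⁻¹ = 1 := mul_inv_cancel₀ (ne_of_gt hx0)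
    simp only [Pi.sub_apply, id_eq]
    nlinarith [sq_nonneg (x-1), inv_pos.mpr hx0, hxi, hx0]
  have hcomp : (∫ x in (1:ℝ)..(1+t), (2 - x)) = t - t^2/2 := by
    rw [intervalIntegral.integral_sub (intervalIntegrable_const) intervalIntegral.intervalIntegrable_id,
      intervalIntegral.integral_const, integral_id]
    simp; ring
  linarith

lemma li2_bounds (s : ℝ) (hs : 0 < s) :
    -s ≤ Li2 (-s) ∧ Li2 (-s) ≤ 0 ∧ Li2 (-s) ≤ -s + s^2/4 := by
  set f : ℝ → ℝ := fun y => -Real.log (1 - y) / y with hf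
  have hfval : ∀ y : ℝ, y < 0 → f y = Real.log (1-y) / (-y) := by
    intro y hy; rw [hf]; simp only [neg_div, div_neg]
  have hub : ∀ y ∈ Set.Icc (-s) 0, f y ≤ 1 := by
    intro y hy
    rcases eq_or_lt_of_le hy.2 with h0 | h0
    · rw [h0]; simp [hf]
    · rw [hfval y h0, div_le_one (by linarith)]
      have := Real.log_le_sub_one_of_pos (show (0:ℝ) < 1 - y by linarith)
      linarith
  have hlb0 : ∀ y ∈ Set.Icc (-s) 0, 0 ≤ f y := by
    intro y hy
    rcases eq_or_lt_of_le hy.2 with h0 | h0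
    · rw [h0]; simp [hf]
    · rw [hfval y h0]
      exact div_nonneg (Real.log_nonneg (by linarith)) (by linarith)
  have hquad : ∀ y ∈ Set.Icc (-s) 0, y ≠ 0 → 1 + y/2 ≤ f y := by
    intro y hy hy0
    have h0 : y < 0 := lt_of_le_of_ne hy.2 hy0
    rw [hfval y h0, le_div_iff₀ (by linarith : (0:ℝ) < -y)]
    have := log_ge_quad (-y) (by linarith)
    have h1 : Real.log (1 - y) = Real.log (1 + -y) := by ring_nf
    nlinarith [this]
  have hmeas : Measurable f :=
    ((Real.measurable_log.comp (measurable_const.sub measurable_id)).neg).div measurable_id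
  have hii : IntervalIntegrable f volume (-s) 0 := by
    rw [intervalIntegrable_iff, Set.uIoc_of_le (by linarith : -s ≤ (0:ℝ))]
    apply Measure.integrableOn_of_bounded (M := 1) (measure_Ioc_lt_top).ne
      hmeas.aestronglyMeasurable
    rw [ae_restrict_iff' measurableSet_Ioc]
    refine Filter.Eventually.of_forall fun y hy => ?_
    have hy' : y ∈ Set.Icc (-s) 0 := Set.Ioc_subset_Icc_self hy
    rw [Real.norm_eq_abs, abs_le]
    exact ⟨by linarith [hlb0 y hy'], hub y hy'⟩
  have hval : Li2 (-s) = -∫ y in (-s)..0, f y := by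
    rw [Li2, intervalIntegral.integral_symm]
  have hF1 : (∫ y in (-s)..0, f y) ≤ s := by
    have := intervalIntegral.integral_mono_on (by linarith : -s ≤ (0:ℝ)) hii
      (intervalIntegrable_const (c := (1:ℝ))) hub
    rw [intervalIntegral.integral_const] at this
    simpa using this
  have hF0 : 0 ≤ ∫ y in (-s)..0, f y :=
    intervalIntegral.integral_nonneg (by linarith) hlb0
  have hF2 : s - s^2/4 ≤ ∫ y in (-s)..0, f y := by
    have hne : ∀ᵐ y : ℝ ∂volume, y ≠ 0 := by
      rw [MeasureTheory.ae_iff]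
      have : {y : ℝ | ¬ y ≠ 0} = {0} := by ext y; simp
      rw [this]; exact Real.volume_singleton
    have hgle : (fun y => 1 + y/2) ≤ᵐ[volume.restrict (Set.Icc (-s) 0)] f := by
      refine (ae_restrict_iff' measurableSet_Icc).mpr ?_
      filter_upwards [hne] with y hy0 hymem
      exact hquad y hymem hy0
    have hgint : IntervalIntegrable (fun y : ℝ => 1 + y/2) volume (-s) 0 :=
      (continuous_const.add (continuous_id.div_const 2)).intervalIntegrable _ _
    have := intervalIntegral.integral_mono_ae_restrict (by linarith : -s ≤ (0:ℝ))
      hgint hii hgle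
    have hcomp : (∫ y in (-s)..0, (1 + y/2)) = s - s^2/4 := by
      rw [intervalIntegral.integral_add intervalIntegrable_const
        (intervalIntegral.intervalIntegrable_id.div_const 2),
        intervalIntegral.integral_const, intervalIntegral.integral_div, integral_id]
      simp; ring
    linarith
  refine ⟨by linarith, by linarith, by linarith⟩

lemma key_ineq (s a b : ℝ) (hs : 0 < s) (hl1 : s - s^2/2 ≤ a) (hl2 : a ≤ s) (ha0 : 0 ≤ a)
    (hb1 : -s ≤ b) (hb2 : b ≤ 0) (hb3 : b ≤ -s + s^2/4) :
    |(1 + 3*s + (π^2/3)*(1 - s) - (1+7*s+7*s^2+s^3) * a / (2*s) + (1-s)*b) / (1+s)^3|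
      ≤ (3 + 2*π^2)/6 := by
  have hpi : (9:ℝ) ≤ π^2 := by nlinarith [Real.pi_gt_three]
  have hD : (0:ℝ) < (1+s)^3 := by positivity
  have hX : (0:ℝ) < 1+7*s+7*s^2+s^3 := by positivity
  have h2s : (0:ℝ) < 2*s := by linarith
  rw [abs_le]
  constructor
  · rw [le_div_iff₀ hD]
    have e1 : (1+7*s+7*s^2+s^3) * a / (2*s) ≤ (1+7*s+7*s^2+s^3)/2 := by
      rw [div_le_iff₀ h2s]
      nlinarith [mul_le_mul_of_nonneg_left hl2 hX.le]
    have e3 : -((1+s)*s) ≤ (1-s)*b := by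
      rcases le_or_gt s 1 with h | h
      · nlinarith [mul_le_mul_of_nonneg_left hb1 (by linarith : (0:ℝ) ≤ 1 - s)]
      · nlinarith [mul_nonneg (by linarith : (0:ℝ) ≤ s - 1) (by linarith : (0:ℝ) ≤ -b)]
    nlinarith [mul_nonneg (by linarith : (0:ℝ) ≤ π^2 - 9)
      (by nlinarith : (0:ℝ) ≤ 2+4*s+3*s^2+s^3)]
  · rw [div_le_iff₀ hD]
    rcases le_or_gt s 1 with h | h
    · have e2 : (1+7*s+7*s^2+s^3)*(2-s)/4 ≤ (1+7*s+7*s^2+s^3) * a / (2*s) := by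
        rw [div_le_div_iff₀ (by norm_num) h2s]
        nlinarith [mul_le_mul_of_nonneg_left hl1 hX.le]
      have e4 : (1-s)*b ≤ (1-s)*(-s+s^2/4) :=
        mul_le_mul_of_nonneg_left hb3 (by linarith)
      nlinarith [mul_nonneg (by linarith : (0:ℝ) ≤ π^2 - 9) hs.le,
        mul_nonneg (by linarith : (0:ℝ) ≤ π^2 - 9) (mul_nonneg hs.le hs.le),
        mul_nonneg (by linarith : (0:ℝ) ≤ π^2 - 9) (mul_nonneg (mul_nonneg hs.le hs.le) hs.le),
        mul_nonneg (mul_nonneg (mul_nonneg hs.le hs.le) hs.le) (by linarith : (0:ℝ) ≤ 1 - s)]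
    · have e5 : (π^2/3)*(1-s) ≤ 0 := by nlinarith
      have e6 : 0 ≤ (1+7*s+7*s^2+s^3) * a / (2*s) := by positivity
      have e7 : (1-s)*b ≤ s^2 := by
        have h1 : (s-1)*(-b) ≤ (s-1)*s :=
          mul_le_mul_of_nonneg_left (by linarith) (by linarith)
        nlinarith [h1]
      have hp3 : (0:ℝ) ≤ (π^2-9)*(1+s)^3 :=
        mul_nonneg (by linarith) (by positivity)
      have hs2 : (0:ℝ) ≤ s^2 := sq_nonneg s
      have hs3 : (0:ℝ) ≤ s^3 := by positivity
      linarith [e5, e6, e7, hp3, hs.le, hs2, hs3]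

/-- The uniform bound |m₃(R)| ≤ (3 + 2π²)/6 for all R > 0. -/
theorem stmt19 : ∀ R : ℝ, 0 < R → |m3 R| ≤ (3 + 2*π^2)/6 := by
  intro R hR
  have hs : (0:ℝ) < R^2 := by positivity
  obtain ⟨hb1, hb2, hb3⟩ := li2_bounds (R^2) hs
  have hl1 : R^2 - (R^2)^2/2 ≤ Real.log (1+R^2) := log_ge_quad (R^2) hs.le
  have hl2 : Real.log (1+R^2) ≤ R^2 := by
    have := Real.log_le_sub_one_of_pos (show (0:ℝ) < 1+R^2 by linarith)
    linarith
  have ha0 : 0 ≤ Real.log (1+R^2) := Real.log_nonneg (by linarith)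
  have hrw : m3 R = (1 + 3*(R^2) + (π^2/3)*(1 - R^2)
      - (1+7*(R^2)+7*(R^2)^2+(R^2)^3) * Real.log (1+R^2) / (2*(R^2))
      + (1-R^2) * Li2 (-R^2)) / (1+R^2)^3 := by
    rw [m3]; ring_nf
  rw [hrw]
  exact key_ineq (R^2) (Real.log (1+R^2)) (Li2 (-R^2)) hs hl1 hl2 ha0 hb1 hb2 hb3
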